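/- Let C_0,...,C_{M−1} be a uniform collection of perfect r-colorings of H(n,q) with common quotient matrix S and density vector ρ, let E be a perfect Mq-coloring of H(M,q) with quotient matrix T where T_{i,j} = 0 if i ≡ j (mod q) and T_{i,j} = 1 otherwise. For 0 ≤ i < M and 0 ≤ j < q define D_{qi+j}(x^0,...,x^{q−1}) = C_i(x^j) on H(qn,q), and define F on H(M + qn, q) by F(y, x) = D_{E(y)}(x). Then F is a perfect coloring with quotient matrix S + (q−1)²·n·I + (q−1)·M·P, where P is the square matrix each of whose rows equals ρ. -/

import Mathlib

/-- The Hamming graph `H(n, α)`: vertices are words of length `n` over `α`,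
adjacent iff they differ in exactly one coordinate. -/
def HammingGraph (n : ℕ) (α : Type*) [DecidableEq α] : SimpleGraph (Fin n → α) where
  Adj x y := hammingDist x y = 1
  symm := ⟨fun x y h => by show hammingDist y x = 1; rw [hammingDist_comm]; exact h⟩
  loopless := ⟨fun x h => by simp only [hammingDist_self] at h; exact absurd h (by omega)⟩

instance {n : ℕ} {α : Type*} [DecidableEq α] : DecidableRel (HammingGraph n α).Adj :=
  fun x y => inferInstanceAs (Decidable (hammingDist x y = 1))

/-- `f` is a perfect coloring of `G` with quotient matrix `S`: every vertex of
color `i` has exactly `S i j` neighbors of color `j`. -/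
def IsPerfectColoring {V K : Type*} [Fintype V] [DecidableEq K] (G : SimpleGraph V)
    [DecidableRel G.Adj] (f : V → K) (S : K → K → ℕ) : Prop :=
  ∀ x : V, ∀ j : K, (Finset.univ.filter (fun y => G.Adj x y ∧ f y = j)).card = S (f x) j

/-- A function on words depends essentially on its `k`-th argument. -/
def EssentialDep {α K : Type*} {n : ℕ} (f : (Fin n → α) → K) (k : Fin n) : Prop :=
  ∃ x y : Fin n → α, (∀ t, t ≠ k → x t = y t) ∧ f x ≠ f y


/-- The `j`-th block of length `n` of a word of length `q*n`. -/
def blockCoords (q n : ℕ) (j : Fin q) (x : Fin (q * n) → Fin q) : Fin n → Fin q :=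
  fun t => x ⟨(j : ℕ) * n + (t : ℕ), by
    have h1 : (j : ℕ) + 1 ≤ q := j.isLt
    have h2 : (t : ℕ) < n := t.isLt
    nlinarith⟩

/-- The coloring `F(y,x) = D_{E(y)}(x)` of `H(M + qn, q)`, where
`D_{q·i+j}(x⁰,…,x^{q-1}) = Cᵢ(xʲ)`. -/
def Fcol {K : Type*} {q n M : ℕ} (hq : 0 < q)
    (C : Fin M → (Fin n → Fin q) → K)
    (E : (Fin M → Fin q) → Fin (M * q))
    (z : Fin (M + q * n) → Fin q) : K :=
  let e : Fin (M * q) := E (fun i => z (Fin.castAdd (q * n) i))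
  C ⟨(e : ℕ) / q, Nat.div_lt_of_lt_mul (by
        exact lt_of_lt_of_le e.isLt (le_of_eq (Nat.mul_comm M q)))⟩
    (blockCoords q n ⟨(e : ℕ) % q, Nat.mod_lt _ hq⟩ (fun t => z (Fin.natAdd M t)))

open Finset

lemma hd_update {m q : ℕ} (x : Fin m → Fin q) (p : Fin m) (v : Fin q) (hv : v ≠ x p) :
    hammingDist x (Function.update x p v) = 1 := by
  unfold hammingDist
  rw [Finset.card_eq_one]
  refine ⟨p, ?_⟩
  ext i
  simp only [Finset.mem_filter, Finset.mem_univ, true_and, Finset.mem_singleton,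
    Function.update_apply]
  rcases eq_or_ne i p with rfl | h
  · simp [Ne.symm hv]
  · simp [h]

lemma hd_one {m q : ℕ} {x y : Fin m → Fin q} (h : hammingDist x y = 1) :
    ∃ p, y p ≠ x p ∧ y = Function.update x p (y p) := by
  unfold hammingDist at h
  rw [Finset.card_eq_one] at h
  obtain ⟨p, hp⟩ := h
  have hmem : ∀ i : Fin m, (x i ≠ y i) ↔ i = p := by
    intro i
    rw [← Finset.mem_singleton, ← hp]
    simp
  refine ⟨p, fun h' => ((hmem p).mpr rfl) h'.symm, ?_⟩
  ext i
  rcases eq_or_ne i p with rfl | h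
  · simp
  · rw [Function.update_apply, if_neg h]
    have := (hmem i).not.mpr h
    push_neg at this
    exact congrArg Fin.val this.symm

lemma card_nbr {m q : ℕ} (x : Fin m → Fin q) (Q : (Fin m → Fin q) → Prop) [DecidablePred Q] :
    (Finset.univ.filter fun y => hammingDist x y = 1 ∧ Q y).card
      = (Finset.univ.filter fun pv : Fin m × Fin q =>
          pv.2 ≠ x pv.1 ∧ Q (Function.update x pv.1 pv.2)).card := by
  refine (Finset.card_bij (fun pv _ => Function.update x pv.1 pv.2) ?_ ?_ ?_).symm
  · intro pv h
    simp only [Finset.mem_filter, Finset.mem_univ, true_and] at h ⊢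
    exact ⟨hd_update x pv.1 pv.2 h.1, h.2⟩
  · intro a ha b hb hab
    simp only [Finset.mem_filter, Finset.mem_univ, true_and] at ha hb
    have h1 : a.1 = b.1 := by
      by_contra hne
      have h2 := congrFun hab a.1
      rw [Function.update_self, Function.update_of_ne hne] at h2
      exact ha.1 h2
    have h2 : a.2 = b.2 := by
      have h3 := congrFun hab a.1
      rwa [Function.update_self, h1, Function.update_self] at h3
    exact Prod.ext h1 h2
  · intro y hy
    simp only [Finset.mem_filter, Finset.mem_univ, true_and] at hy
    obtain ⟨p, hp1, hp2⟩ := hd_one hy.1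
    refine ⟨(p, y p), ?_, hp2.symm⟩
    simp only [Finset.mem_filter, Finset.mem_univ, true_and]
    exact ⟨hp1, by rw [← hp2]; exact hy.2⟩

lemma card_nbr' {m q : ℕ} (x : Fin m → Fin q) (Q : (Fin m → Fin q) → Prop) [DecidablePred Q] :
    (Finset.univ.filter fun y => hammingDist x y = 1 ∧ Q y).card
      = ∑ p : Fin m, ∑ v : Fin q,
          if v ≠ x p ∧ Q (Function.update x p v) then 1 else 0 := by
  rw [card_nbr, Finset.card_filter, Fintype.sum_prod_type]

lemma sum_ne_card {q : ℕ} (c : Fin q) :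
    (∑ v : Fin q, if v ≠ c then 1 else 0) = q - 1 := by
  rw [Finset.sum_boole]
  simp [Finset.filter_ne', Finset.card_erase_of_mem]

/-- Main construction: `F(y,x) = D_{E(y)}(x)` is a perfect coloring of `H(M+qn,q)`
with quotient matrix `S + (q-1)²·n·I + (q-1)·M·P`, where the row of `P` is the
density vector, so `(q-1)·M·P_{a,b} = (q-1) · (multiplicity of color b in the
uniform collection)`. -/
theorem stmt9 {K : Type*} [Fintype K] [DecidableEq K] {q n M : ℕ} (hq : 0 < q)
    [NeZero M]
    (C : Fin M → (Fin n → Fin q) → K) (S : K → K → ℕ)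
    (hsurj : ∀ m, Function.Surjective (C m))
    (hperf : ∀ m, IsPerfectColoring (HammingGraph n (Fin q)) (C m) S)
    (huni : ∀ x y : Fin n → Fin q,
      Multiset.map (fun m => C m x) Finset.univ.val
        = Multiset.map (fun m => C m y) Finset.univ.val)
    (E : (Fin M → Fin q) → Fin (M * q))
    (hE : IsPerfectColoring (HammingGraph M (Fin q)) E
      (fun a b => if (a : ℕ) % q = (b : ℕ) % q then 0 else 1)) :
    IsPerfectColoring (HammingGraph (M + q * n) (Fin q)) (Fcol hq C E)
      (fun a b => S a b + (if a = b then (q - 1) ^ 2 * n else 0)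
        + (q - 1) * (Finset.univ.filter
            fun m : Fin M => C m (fun _ => (⟨0, hq⟩ : Fin q)) = b).card) := by
  intro z b
  classical
  beta_reduce
  set Kb : ℕ := (Finset.univ.filter
      fun m : Fin M => C m (fun _ => (⟨0, hq⟩ : Fin q)) = b).card with hKb
  -- abbreviations
  set y : Fin M → Fin q := fun i => z (Fin.castAdd (q * n) i) with hy
  set x : Fin (q * n) → Fin q := fun t => z (Fin.natAdd M t) with hx
  set G : (Fin M → Fin q) → (Fin (q * n) → Fin q) → K := fun Y X =>
    C ⟨(E Y : ℕ) / q, Nat.div_lt_of_lt_mul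
        (lt_of_lt_of_le (E Y).isLt (le_of_eq (Nat.mul_comm M q)))⟩
      (blockCoords q n ⟨(E Y : ℕ) % q, Nat.mod_lt _ hq⟩ X) with hG
  have hFcol : ∀ z' : Fin (M + q * n) → Fin q,
      Fcol hq C E z' = G (fun i => z' (Fin.castAdd (q * n) i))
        (fun t => z' (Fin.natAdd M t)) := fun _ => rfl
  set e : Fin (M * q) := E y with he
  set ci : Fin M := ⟨(e : ℕ) / q, Nat.div_lt_of_lt_mul
      (lt_of_lt_of_le e.isLt (le_of_eq (Nat.mul_comm M q)))⟩ with hci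
  set cj : Fin q := ⟨(e : ℕ) % q, Nat.mod_lt _ hq⟩ with hcj
  set u : Fin n → Fin q := blockCoords q n cj x with hu
  have ha : Fcol hq C E z = C ci u := rfl
  have hGyX : ∀ X, G y X = C ci (blockCoords q n cj X) := fun _ => rfl
  -- uniformity
  have Kuni : ∀ v : Fin n → Fin q,
      (Finset.univ.filter fun m : Fin M => C m v = b).card = Kb := by
    intro v
    have h := congrArg (fun s => Multiset.countP (fun k => k = b) s)
      (huni v (fun _ => ⟨0, hq⟩))
    simp only [Multiset.countP_map] at h
    exact h
  -- update lemmas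
  have hyupdY : ∀ (i : Fin M) (v : Fin q),
      (fun i' => Function.update z (Fin.castAdd (q * n) i) v (Fin.castAdd (q * n) i'))
        = Function.update y i v := by
    intro i v; funext i'
    rcases eq_or_ne i' i with rfl | h
    · simp
    · rw [Function.update_of_ne (fun hc => h (Fin.ext (by
          simpa using congrArg Fin.val hc))), Function.update_of_ne h]
  have hxupdY : ∀ (i : Fin M) (v : Fin q),
      (fun t => Function.update z (Fin.castAdd (q * n) i) v (Fin.natAdd M t)) = x := by
    intro i v; funext t
    rw [Function.update_of_ne (fun hc => by
      have := congrArg Fin.val hc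
      simp only [Fin.coe_natAdd, Fin.coe_castAdd] at this
      omega)]
  have hyupdX : ∀ (t : Fin (q * n)) (v : Fin q),
      (fun i => Function.update z (Fin.natAdd M t) v (Fin.castAdd (q * n) i)) = y := by
    intro t v; funext i
    rw [Function.update_of_ne (fun hc => by
      have := congrArg Fin.val hc
      simp only [Fin.coe_natAdd, Fin.coe_castAdd] at this
      omega)]
  have hxupdX : ∀ (t : Fin (q * n)) (v : Fin q),
      (fun t' => Function.update z (Fin.natAdd M t) v (Fin.natAdd M t'))
        = Function.update x t v := by
    intro t v; funext t'
    rcases eq_or_ne t' t with rfl | h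
    · simp
    · rw [Function.update_of_ne (fun hc => h (Fin.ext (by
          have := congrArg Fin.val hc
          simp only [Fin.coe_natAdd] at this
          omega))), Function.update_of_ne h]
  -- rewrite the target filter to hammingDist form and to a double sum
  have hfil : (Finset.univ.filter fun z' =>
        (HammingGraph (M + q * n) (Fin q)).Adj z z' ∧ Fcol hq C E z' = b)
      = Finset.univ.filter fun z' => hammingDist z z' = 1 ∧ Fcol hq C E z' = b :=
    Finset.filter_congr (fun _ _ => Iff.rfl)
  rw [hfil, card_nbr' z (fun z' => Fcol hq C E z' = b), Fin.sum_univ_add]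
  -- Part Y
  have hY : (∑ i : Fin M, ∑ v : Fin q,
      if v ≠ z (Fin.castAdd (q * n) i) ∧
        Fcol hq C E (Function.update z (Fin.castAdd (q * n) i) v) = b then 1 else 0)
      = (q - 1) * Kb := by
    -- reduce to a neighbor count in H(M,q)
    set hfun : Fin (M * q) → K := fun e' =>
      C ⟨(e' : ℕ) / q, Nat.div_lt_of_lt_mul
          (lt_of_lt_of_le e'.isLt (le_of_eq (Nat.mul_comm M q)))⟩
        (blockCoords q n ⟨(e' : ℕ) % q, Nat.mod_lt _ hq⟩ x) with hhfun
    have hGy : ∀ y', G y' x = hfun (E y') := fun _ => rfl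
    have step1 : (∑ i : Fin M, ∑ v : Fin q,
        if v ≠ z (Fin.castAdd (q * n) i) ∧
          Fcol hq C E (Function.update z (Fin.castAdd (q * n) i) v) = b then 1 else 0)
        = ∑ i : Fin M, ∑ v : Fin q,
            if v ≠ y i ∧ hfun (E (Function.update y i v)) = b then 1 else 0 := by
      refine Finset.sum_congr rfl fun i _ => Finset.sum_congr rfl fun v _ => ?_
      have h1 : Fcol hq C E (Function.update z (Fin.castAdd (q * n) i) v)
          = hfun (E (Function.update y i v)) := by
        rw [hFcol, hyupdY i v, hxupdY i v, hGy]
      rw [h1]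
    rw [step1, ← card_nbr' y (fun y' => hfun (E y') = b)]
    rw [Finset.card_eq_sum_card_fiberwise
      (f := fun y' => E y') (t := Finset.univ) (fun _ _ => Finset.mem_univ _)]
    have step2 : ∀ e' : Fin (M * q),
        ((Finset.univ.filter fun y' => hammingDist y y' = 1 ∧ hfun (E y') = b).filter
          fun y' => E y' = e').card
        = (if hfun e' = b then 1 else 0) * (if (e : ℕ) % q = (e' : ℕ) % q then 0 else 1) := by
      intro e'
      rw [Finset.filter_filter]
      rcases eq_or_ne (hfun e') b with hb | hb
      · rw [if_pos hb, one_mul]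
        have hcong : (Finset.univ.filter fun y' =>
              (hammingDist y y' = 1 ∧ hfun (E y') = b) ∧ E y' = e')
            = Finset.univ.filter fun y' =>
              (HammingGraph M (Fin q)).Adj y y' ∧ E y' = e' := by
          refine Finset.filter_congr fun y' _ => ?_
          constructor
          · rintro ⟨⟨h1, _⟩, h3⟩; exact ⟨h1, h3⟩
          · rintro ⟨h1, h3⟩; exact ⟨⟨h1, by rw [h3, hb]⟩, h3⟩
        rw [hcong, hE y e']
      · rw [if_neg hb, zero_mul]
        rw [Finset.card_eq_zero, Finset.filter_eq_empty_iff]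
        rintro y' _ ⟨⟨_, h2⟩, h3⟩
        exact hb (by rw [← h3, h2])
    rw [Finset.sum_congr rfl (fun e' _ => step2 e')]
    rw [← Equiv.sum_comp (finProdFinEquiv : Fin M × Fin q ≃ Fin (M * q)), Fintype.sum_prod_type]
    have hval : ∀ (i : Fin M) (j : Fin q),
        ((finProdFinEquiv (i, j) : Fin (M * q)) : ℕ) = (j : ℕ) + q * (i : ℕ) := fun _ _ => rfl
    have hmod : ∀ (i : Fin M) (j : Fin q),
        ((finProdFinEquiv (i, j) : Fin (M * q)) : ℕ) % q = (j : ℕ) := by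
      intro i j
      rw [hval, Nat.add_mul_mod_self_left, Nat.mod_eq_of_lt j.isLt]
    have hdiv : ∀ (i : Fin M) (j : Fin q),
        ((finProdFinEquiv (i, j) : Fin (M * q)) : ℕ) / q = (i : ℕ) := by
      intro i j
      rw [hval, Nat.add_mul_div_left _ _ hq, Nat.div_eq_of_lt j.isLt, Nat.zero_add]
    have hfe : ∀ (i : Fin M) (j : Fin q),
        hfun (finProdFinEquiv (i, j)) = C i (blockCoords q n j x) := by
      intro i j
      have h1 : (⟨((finProdFinEquiv (i, j) : Fin (M * q)) : ℕ) / q,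
          Nat.div_lt_of_lt_mul (lt_of_lt_of_le (finProdFinEquiv (i, j)).isLt
            (le_of_eq (Nat.mul_comm M q)))⟩ : Fin M) = i := Fin.ext (hdiv i j)
      have h2 : (⟨((finProdFinEquiv (i, j) : Fin (M * q)) : ℕ) % q,
          Nat.mod_lt _ hq⟩ : Fin q) = j := Fin.ext (hmod i j)
      rw [hhfun]
      show C _ (blockCoords q n _ x) = _
      rw [h1, h2]
    have step3 : ∀ (i : Fin M) (j : Fin q),
        (if hfun (finProdFinEquiv (i, j)) = b then 1 else 0) *
          (if (e : ℕ) % q = ((finProdFinEquiv (i, j) : Fin (M * q)) : ℕ) % q then 0 else 1)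
        = (if C i (blockCoords q n j x) = b then 1 else 0) * (if cj = j then 0 else 1) := by
      intro i j
      rw [hfe, hmod]
      congr 1
      have : ((e : ℕ) % q = (j : ℕ)) ↔ cj = j := by
        rw [Fin.ext_iff]
      by_cases hcase : cj = j
      · rw [if_pos (this.mpr hcase), if_pos hcase]
      · rw [if_neg (fun hh => hcase (this.mp hh)), if_neg hcase]
    rw [Finset.sum_congr rfl (fun i _ => Finset.sum_congr rfl (fun j _ => step3 i j))]
    rw [Finset.sum_comm]
    have step4 : ∀ j : Fin q,
        (∑ i : Fin M, (if C i (blockCoords q n j x) = b then 1 else 0) *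
          (if cj = j then 0 else 1))
        = if cj = j then 0 else Kb := by
      intro j
      by_cases hcase : cj = j
      · simp [hcase]
      · simp only [if_neg hcase, mul_one]
        rw [← Finset.card_filter]
        exact Kuni _
    rw [Finset.sum_congr rfl (fun j _ => step4 j)]
    rw [← Finset.add_sum_erase _ _ (Finset.mem_univ cj), if_pos rfl, Nat.zero_add]
    rw [Finset.sum_congr rfl (fun j hj => if_neg (fun hh : cj = j =>
      (Finset.mem_erase.mp hj).1 hh.symm))]
    rw [Finset.sum_const, Finset.card_erase_of_mem (Finset.mem_univ cj), Finset.card_univ,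
      Fintype.card_fin, smul_eq_mul]

  -- Part X
  have hX : (∑ t : Fin (q * n), ∑ v : Fin q,
      if v ≠ z (Fin.natAdd M t) ∧
        Fcol hq C E (Function.update z (Fin.natAdd M t) v) = b then 1 else 0)
      = S (C ci u) b + (if C ci u = b then (q - 1) ^ 2 * n else 0) := by
    have hFX : ∀ (t : Fin (q * n)) (v : Fin q),
        Fcol hq C E (Function.update z (Fin.natAdd M t) v)
          = C ci (blockCoords q n cj (Function.update x t v)) := by
      intro t v
      rw [hFcol, hyupdX t v, hxupdX t v, hGyX]
    rw [← Equiv.sum_comp (finProdFinEquiv : Fin q × Fin n ≃ Fin (q * n))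
        (fun t => ∑ v : Fin q, if v ≠ z (Fin.natAdd M t) ∧
          Fcol hq C E (Function.update z (Fin.natAdd M t) v) = b then 1 else 0),
      Fintype.sum_prod_type]
    have hposval : ∀ (j' : Fin q) (s : Fin n),
        ((finProdFinEquiv (j', s) : Fin (q * n)) : ℕ) = (s : ℕ) + n * (j' : ℕ) :=
      fun _ _ => rfl
    have hblk : ∀ (j j' : Fin q) (s : Fin n) (v : Fin q),
        blockCoords q n j (Function.update x (finProdFinEquiv (j', s)) v)
          = if j' = j then Function.update (blockCoords q n j x) s v
            else blockCoords q n j x := by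
      intro j j' s v
      have hn : 0 < n := s.pos
      funext t
      by_cases hj : j' = j
      · subst hj
        rw [if_pos rfl]
        simp only [blockCoords, Function.update_apply]
        refine if_congr ?_ rfl rfl
        constructor
        · intro hc
          have hv : (j' : ℕ) * n + (t : ℕ) = (s : ℕ) + n * (j' : ℕ) := congrArg Fin.val hc
          have hcm : (j' : ℕ) * n = n * (j' : ℕ) := Nat.mul_comm _ _
          exact Fin.ext (by omega)
        · rintro rfl
          exact Fin.ext (by
            show (j' : ℕ) * n + (t : ℕ) = (t : ℕ) + n * (j' : ℕ)
            ring)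
      · rw [if_neg hj]
        simp only [blockCoords, Function.update_apply]
        rw [if_neg]
        intro hc
        have hv : (j : ℕ) * n + (t : ℕ) = (s : ℕ) + n * (j' : ℕ) := congrArg Fin.val hc
        have e1 : ((j : ℕ) * n + (t : ℕ)) / n = j := by
          rw [Nat.mul_comm, Nat.mul_add_div hn, Nat.div_eq_of_lt t.isLt, Nat.add_zero]
        have e2 : ((s : ℕ) + n * (j' : ℕ)) / n = j' := by
          rw [Nat.add_mul_div_left _ _ hn, Nat.div_eq_of_lt s.isLt, Nat.zero_add]
        exact hj (Fin.ext (by rw [← e2, ← hv, e1]))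
    have hxu : ∀ (j' : Fin q) (s : Fin n),
        x (finProdFinEquiv (j', s)) = blockCoords q n j' x s := by
      intro j' s
      simp only [blockCoords]
      congr 1
      exact Fin.ext (by
        show (s : ℕ) + n * (j' : ℕ) = (j' : ℕ) * n + (s : ℕ)
        ring)
    have step1 : ∀ (j' : Fin q) (s : Fin n) (v : Fin q),
        (if v ≠ z (Fin.natAdd M (finProdFinEquiv (j', s))) ∧
            Fcol hq C E (Function.update z
              (Fin.natAdd M (finProdFinEquiv (j', s))) v) = b then 1 else 0)
          = if v ≠ blockCoords q n j' x s ∧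
              C ci (if j' = cj then Function.update u s v else u) = b then 1 else 0 := by
      intro j' s v
      show (if v ≠ x (finProdFinEquiv (j', s)) ∧
            Fcol hq C E (Function.update z
              (Fin.natAdd M (finProdFinEquiv (j', s))) v) = b then 1 else 0) = _
      rw [hxu, hFX, hblk cj j' s v, ← hu]
    rw [Finset.sum_congr rfl (fun j' _ => Finset.sum_congr rfl
      (fun s _ => Finset.sum_congr rfl (fun v _ => step1 j' s v)))]
    rw [← Finset.add_sum_erase _ _ (Finset.mem_univ cj)]
    have hcjterm : (∑ s : Fin n, ∑ v : Fin q,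
        if v ≠ blockCoords q n cj x s ∧
          C ci (if cj = cj then Function.update u s v else u) = b then 1 else 0)
        = S (C ci u) b := by
      simp only [if_pos rfl]
      rw [← hu]
      show (∑ p : Fin n, ∑ v : Fin q,
        if v ≠ u p ∧ C ci (Function.update u p v) = b then 1 else 0) = S (C ci u) b
      rw [← card_nbr' u (fun w => C ci w = b), ← hperf ci u b]
      exact congrArg Finset.card (Finset.filter_congr fun _ _ => Iff.rfl)
    have herase : ∀ j' ∈ Finset.univ.erase cj, (∑ s : Fin n, ∑ v : Fin q,
        if v ≠ blockCoords q n j' x s ∧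
          C ci (if j' = cj then Function.update u s v else u) = b then 1 else 0)
        = if C ci u = b then n * (q - 1) else 0 := by
      intro j' hj'
      have hne := (Finset.mem_erase.mp hj').1
      simp only [if_neg hne]
      by_cases hab : C ci u = b
      · rw [if_pos hab]
        have hsv : ∀ (s : Fin n) (v : Fin q),
            (if v ≠ blockCoords q n j' x s ∧ C ci u = b then 1 else 0)
              = if v ≠ blockCoords q n j' x s then 1 else 0 := by
          intro s v
          by_cases h : v ≠ blockCoords q n j' x s
          · rw [if_pos ⟨h, hab⟩, if_pos h]
          · rw [if_neg (fun hc => h hc.1), if_neg h]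
        rw [Finset.sum_congr rfl (fun s _ => Finset.sum_congr rfl (fun v _ => hsv s v))]
        rw [Finset.sum_congr rfl (fun s _ => sum_ne_card (blockCoords q n j' x s))]
        rw [Finset.sum_const, Finset.card_univ, Fintype.card_fin, smul_eq_mul]
      · rw [if_neg hab]
        refine Finset.sum_eq_zero fun s _ => Finset.sum_eq_zero fun v _ => ?_
        rw [if_neg (fun hc => hab hc.2)]
    rw [hcjterm, Finset.sum_congr rfl herase, Finset.sum_const,
      Finset.card_erase_of_mem (Finset.mem_univ cj), Finset.card_univ,
      Fintype.card_fin, smul_eq_mul]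
    by_cases hab : C ci u = b
    · rw [if_pos hab, if_pos hab]
      ring
    · rw [if_neg hab, if_neg hab, Nat.mul_zero]

  rw [hY, hX, ha]
  ring
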